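/- Let A and B be nonempty closed convex subsets of X with A ∩ B = ∅. Then there exists u ∈ X with u ≠ 0 such that ⟪a, u⟫ ≤ ⟪b, u⟫ for all a ∈ A and all b ∈ B, and moreover (rec A) ∩ (rec B) ⊆ {u}^⊥; in particular, (rec A) ∩ (rec B) is a nonempty closed convex cone contained in a proper hyperplane of X. -/

import Mathlib

open Filter Topology
open Pointwise

variable {X : Type*} [NormedAddCommGroup X] [InnerProductSpace ℝ X] [FiniteDimensional ℝ X]

/-- The recession cone `rec S = {x : x + S ⊆ S}` of a set `S`. -/
def recCone (S : Set X) : Set X := {x : X | ∀ s ∈ S, x + s ∈ S}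

lemma aux_not_int_closure {C : Set X} (hC : Convex ℝ C) (h0 : (0:X) ∉ C) :
    (0:X) ∉ interior (closure C) := by
  intro hmem
  have hCc : Convex ℝ (closure C) := hC.closure
  have htop : affineSpan ℝ (closure C) = ⊤ :=
    hCc.interior_nonempty_iff_affineSpan_eq_top.mp ⟨0, hmem⟩
  have hspanC : affineSpan ℝ C = ⊤ := by
    have hclosed : IsClosed ((affineSpan ℝ C : Set X)) :=
      (affineSpan ℝ C).closed_of_finiteDimensional
    have hsub : closure C ⊆ (affineSpan ℝ C : Set X) :=
      hclosed.closure_subset_iff.mpr (subset_affineSpan ℝ C)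
    have := affineSpan_le.mpr hsub
    rw [htop] at this
    exact top_le_iff.mp this
  obtain ⟨y, hy⟩ : (interior C).Nonempty :=
    hC.interior_nonempty_iff_affineSpan_eq_top.mpr hspanC
  by_cases hy0 : y = 0
  · exact h0 (interior_subset (hy0 ▸ hy))
  · obtain ⟨r, hr, hball⟩ := Metric.isOpen_iff.mp isOpen_interior 0 hmem
    have hyn : (0:ℝ) < ‖y‖ := norm_pos_iff.mpr hy0
    set ε : ℝ := r / (2 * ‖y‖) with hε
    have hεpos : 0 < ε := div_pos hr (by positivity)
    have hz : (-ε) • y ∈ closure C := by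
      apply interior_subset
      apply hball
      simp only [Metric.mem_ball, dist_zero_right, norm_smul, norm_neg, Real.norm_eq_abs,
        abs_of_pos hεpos]
      rw [hε, div_mul_eq_mul_div, mul_comm, div_lt_iff₀ (by positivity)]
      nlinarith
    have hcomb : (0:X) ∈ interior C := by
      have h := hC.combo_closure_interior_mem_interior (x := (-ε) • y) (y := y)
        (a := 1/(1+ε)) (b := ε/(1+ε)) hz hy (by positivity) (by positivity) (by field_simp)
      convert h using 1
      rw [smul_smul, ← add_smul]
      have : 1 / (1 + ε) * -ε + ε / (1 + ε) = 0 := by field_simp; ring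
      rw [this, zero_smul]
    exact h0 (interior_subset hcomb)

lemma aux_sep {C : Set X} (hC : Convex ℝ C) (hne : C.Nonempty) (h0 : (0:X) ∉ C) :
    ∃ u : X, u ≠ 0 ∧ ∀ c ∈ C, 0 ≤ (inner ℝ c u : ℝ) := by
  have hnotint := aux_not_int_closure hC h0
  -- for each n, find a unit vector uₙ with ⟪c, uₙ⟫ ≥ -1/(n+1)
  have key : ∀ n : ℕ, ∃ u : X, ‖u‖ = 1 ∧ ∀ c ∈ C, -(1/((n:ℝ)+1)) ≤ (inner ℝ c u : ℝ) := by
    intro n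
    have h0cl : (0:X) ∈ closure ((closure C)ᶜ) := by
      rw [closure_compl]
      exact hnotint
    obtain ⟨x, hxmem, hxd⟩ := Metric.mem_closure_iff.mp h0cl (1/((n:ℝ)+1)) (by positivity)
    obtain ⟨f, s, hfx, hfc⟩ :=
      geometric_hahn_banach_point_closed (hC.closure) isClosed_closure hxmem
    set v : X := (InnerProductSpace.toDual ℝ X).symm f with hv
    have hinner : ∀ z : X, (inner ℝ v z : ℝ) = f z := fun z => by
      simp [hv, InnerProductSpace.toDual_symm_apply]
    have hvne : v ≠ 0 := by
      obtain ⟨c, hc⟩ := hne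
      intro hv0
      have h1 : (inner ℝ v x : ℝ) < inner ℝ v c := by
        rw [hinner, hinner]
        exact hfx.trans (hfc c (subset_closure hc))
      rw [hv0] at h1; simp at h1
    have hvpos : (0:ℝ) < ‖v‖ := norm_pos_iff.mpr hvne
    refine ⟨‖v‖⁻¹ • v, by simp [norm_smul, abs_of_pos (inv_pos.mpr hvpos),
      inv_mul_cancel₀ hvpos.ne'], ?_⟩
    intro c hc
    have h1 : (inner ℝ x ((‖v‖⁻¹:ℝ) • v) : ℝ) ≤ inner ℝ c ((‖v‖⁻¹:ℝ) • v) := by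
      rw [inner_smul_right, inner_smul_right,
        (real_inner_comm v x).trans (hinner x), (real_inner_comm v c).trans (hinner c)]
      have := (hfx.trans (hfc c (subset_closure hc))).le
      exact mul_le_mul_of_nonneg_left this (inv_nonneg.mpr hvpos.le)
    have h2 : -(1/((n:ℝ)+1)) ≤ (inner ℝ x ((‖v‖⁻¹:ℝ) • v) : ℝ) := by
      have hcs := abs_real_inner_le_norm x ((‖v‖⁻¹:ℝ) • v)
      have hnorm : ‖(‖v‖⁻¹:ℝ) • v‖ = 1 := by
        simp [norm_smul, abs_of_pos (inv_pos.mpr hvpos), inv_mul_cancel₀ hvpos.ne']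
      rw [hnorm, mul_one] at hcs
      have hx1 : ‖x‖ ≤ 1/((n:ℝ)+1) := by
        have : dist 0 x = ‖x‖ := by simp [dist_eq_norm]
        linarith [hxd, this ▸ hxd]
      have := neg_abs_le ((inner ℝ x ((‖v‖⁻¹:ℝ) • v) : ℝ))
      linarith [hcs]
    linarith
  choose u hu1 hu2 using key
  obtain ⟨w, hwmem, φ, hφmono, hφtend⟩ :=
    (isCompact_sphere (0:X) 1).tendsto_subseq (x := u) (fun n => by simp [hu1 n])
  refine ⟨w, ?_, ?_⟩
  · intro hw0
    rw [hw0] at hwmem; simp at hwmem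
  · intro c hc
    have hlim1 : Tendsto (fun n => (inner ℝ c (u (φ n)) : ℝ)) atTop (𝓝 (inner ℝ c w : ℝ)) := by
      exact ((continuous_const.inner continuous_id).tendsto w).comp hφtend
    have hlim2 : Tendsto (fun n => -(1/(((φ n):ℝ)+1))) atTop (𝓝 (0:ℝ)) := by
      have h := (tendsto_one_div_add_atTop_nhds_zero_nat (𝕜 := ℝ)).comp hφmono.tendsto_atTop
      have := h.neg
      simpa using this
    exact le_of_tendsto_of_tendsto' hlim2 hlim1 (fun n => hu2 (φ n) c hc)

lemma aux_nat_smul {S : Set X} {x : X} (hx : x ∈ recCone S) :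
    ∀ n : ℕ, ∀ s ∈ S, (n:ℝ) • x + s ∈ S := by
  intro n
  induction n with
  | zero => intro s hs; simpa using hs
  | succ m ih =>
      intro s hs
      have : ((m+1:ℕ):ℝ) • x + s = x + ((m:ℝ) • x + s) := by
        push_cast; rw [add_smul]; ring_nf; module
      rw [this]
      exact hx _ (ih s hs)

lemma aux_smul_mem {S : Set X} (hS : Convex ℝ S) {x : X} (hx : x ∈ recCone S)
    {t : ℝ} (ht : 0 ≤ t) : t • x ∈ recCone S := by
  intro s hs
  rcases eq_or_lt_of_le ht with h | h
  · simpa [← h] using hs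
  · obtain ⟨n, hn⟩ := exists_nat_ge t
    have hnpos : (0:ℝ) < n := lt_of_lt_of_le h hn
    have h1 : (n:ℝ) • x + s ∈ S := aux_nat_smul hx n s hs
    have hcomb := hS h1 hs (a := t/n) (b := 1 - t/n)
      (div_nonneg ht hnpos.le) (by rw [sub_nonneg]; exact div_le_one_of_le₀ hn hnpos.le)
      (by ring)
    convert hcomb using 1
    rw [smul_add, smul_smul, div_mul_cancel₀ _ hnpos.ne']
    module


/-- If `A` and `B` are disjoint nonempty closed convex sets, then
there is a nonzero separating functional `u` with `(rec A) ∩ (rec B) ⊆ {u}^⊥`; in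
particular `(rec A) ∩ (rec B)` is a nonempty closed convex cone contained in the
proper hyperplane `{u}^⊥`. -/
theorem stmt5 (A B : Set X) (hAne : A.Nonempty) (hAcl : IsClosed A) (hAconv : Convex ℝ A)
    (hBne : B.Nonempty) (hBcl : IsClosed B) (hBconv : Convex ℝ B)
    (hdisj : A ∩ B = ∅) :
    (∃ u : X, u ≠ 0 ∧ (∀ a ∈ A, ∀ b ∈ B, (inner ℝ a u : ℝ) ≤ (inner ℝ b u : ℝ)) ∧
      recCone A ∩ recCone B ⊆ {x : X | (inner ℝ x u : ℝ) = 0}) ∧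
    (recCone A ∩ recCone B).Nonempty ∧
    IsClosed (recCone A ∩ recCone B) ∧
    Convex ℝ (recCone A ∩ recCone B) ∧
    (∀ t : ℝ, 0 ≤ t → ∀ x ∈ recCone A ∩ recCone B, t • x ∈ recCone A ∩ recCone B) := by
  have hzero : ∀ S : Set X, (0:X) ∈ recCone S := fun S s hs => by simpa using hs
  have hrecCl : ∀ S : Set X, IsClosed S → IsClosed (recCone S) := by
    intro S hScl
    have : recCone S = ⋂ s ∈ S, (fun x : X => x + s) ⁻¹' S := by
      ext x; simp [recCone, Set.mem_iInter]
    rw [this]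
    exact isClosed_biInter fun s _ => hScl.preimage (continuous_id.add continuous_const)
  have hrecConv : ∀ S : Set X, Convex ℝ S → Convex ℝ (recCone S) := by
    intro S hSconv x hx y hy a b ha hb hab s hs
    have h1 : x + s ∈ S := hx s hs
    have h2 : y + s ∈ S := hy s hs
    have := hSconv h1 h2 ha hb hab
    convert this using 1
    conv_lhs => rw [show s = a • s + b • s from by rw [← add_smul, hab, one_smul]]
    module
  refine ⟨?_, ⟨0, hzero A, hzero B⟩,
    (hrecCl A hAcl).inter (hrecCl B hBcl),
    (hrecConv A hAconv).inter (hrecConv B hBconv),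
    fun t ht x hx => ⟨aux_smul_mem hAconv hx.1 ht, aux_smul_mem hBconv hx.2 ht⟩⟩
  -- separation
  have hCconv : Convex ℝ (B - A) := hBconv.sub hAconv
  have hCne : (B - A).Nonempty := hBne.sub hAne
  have h0 : (0:X) ∉ B - A := by
    rintro ⟨b, hb, a, ha, hab⟩
    have hba : a = b := (sub_eq_zero.mp hab).symm
    exact absurd (Set.mem_inter (hba ▸ ha) hb) (by rw [hdisj]; exact Set.notMem_empty _)
  obtain ⟨u, hu0, hu⟩ := aux_sep hCconv hCne h0
  have hsep : ∀ a ∈ A, ∀ b ∈ B, (inner ℝ a u : ℝ) ≤ (inner ℝ b u : ℝ) := by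
    intro a ha b hb
    have := hu (b - a) (Set.sub_mem_sub hb ha)
    rw [inner_sub_left] at this
    linarith
  refine ⟨u, hu0, hsep, ?_⟩
  rintro x ⟨hxA, hxB⟩
  obtain ⟨a, ha⟩ := hAne
  obtain ⟨b, hb⟩ := hBne
  have hle : (inner ℝ x u : ℝ) ≤ 0 := by
    by_contra hpos
    push_neg at hpos
    obtain ⟨n, hn⟩ := exists_nat_gt (((inner ℝ b u : ℝ) - (inner ℝ a u : ℝ)) / (inner ℝ x u : ℝ))
    have hmem : (n:ℝ) • x + a ∈ A := aux_nat_smul hxA n a ha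
    have := hsep _ hmem b hb
    rw [inner_add_left, real_inner_smul_left] at this
    rw [div_lt_iff₀ hpos] at hn
    linarith
  have hge : (0:ℝ) ≤ (inner ℝ x u : ℝ) := by
    by_contra hneg
    push_neg at hneg
    obtain ⟨n, hn⟩ := exists_nat_gt (((inner ℝ b u : ℝ) - (inner ℝ a u : ℝ)) / (-(inner ℝ x u : ℝ)))
    have hmem : (n:ℝ) • x + b ∈ B := aux_nat_smul hxB n b hb
    have := hsep a ha _ hmem
    rw [inner_add_left, real_inner_smul_left] at this
    rw [div_lt_iff₀ (by linarith)] at hn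
    linarith
  exact le_antisymm hle hge
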